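/- For any fixed n ≥ 2, the code 𝒟(n) is non-expandable: for every binary bifix-free string ψ of length at most n with ψ ∉ 𝒟(n), the set 𝒟(n) ∪ {ψ} is not a cross-fix-free code. -/

import Mathlib

/-!
Binary strings are modeled as `List Bool`, with `true` = 1 and `false` = 0.
-/

/-- A string `v` is bifix-free if no nonempty proper prefix of `v` equals a
(proper) suffix of `v`. -/
def BifixFree (v : List Bool) : Prop :=
  ∀ p : List Bool, p ≠ [] → p ≠ v → p <+: v → ¬ p <:+ v

/-- The set `V_n^(k)`: binary strings of length `n` starting with `k` ones,
ending with `k` zeros, whose middle factor `v_{k+1} … v_{n-k}` begins with 0,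
ends with 1, and contains neither `k` consecutive 0's nor `k` consecutive 1's. -/
def Vnk (n k : ℕ) : Set (List Bool) :=
  {v | v.length = n ∧
    List.replicate k true <+: v ∧
    List.replicate k false <:+ v ∧
    ((v.drop k).take (n - 2 * k)).head? = some false ∧
    ((v.drop k).take (n - 2 * k)).getLast? = some true ∧
    ¬ List.replicate k false <:+: ((v.drop k).take (n - 2 * k)) ∧
    ¬ List.replicate k true <:+: ((v.drop k).take (n - 2 * k))}

/-- `𝒱^(k) = ⋃_{i ≥ 2k+2} V_i^(k)`. -/
def VkSet (k : ℕ) : Set (List Bool) := ⋃ i ∈ {i : ℕ | 2 * k + 2 ≤ i}, Vnk i k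

/-- `𝒱^(k)(n)`: elements of `𝒱^(k)` of length at most `n`. -/
def VkLe (k n : ℕ) : Set (List Bool) := {v ∈ VkSet k | v.length ≤ n}

/-- The set of binary strings of length `ℓ` that begin with 0, end with 1, and
contain neither `k` consecutive 0's nor `k` consecutive 1's. -/
def Rset (k ℓ : ℕ) : Set (List Bool) :=
  {w | w.length = ℓ ∧ w.head? = some false ∧ w.getLast? = some true ∧
    ¬ List.replicate k false <:+: w ∧ ¬ List.replicate k true <:+: w}

/-- `r_ℓ^(k)`, with the convention `r_0^(k) = 1`. -/
noncomputable def r (k ℓ : ℕ) : ℕ := if ℓ = 0 then 1 else (Rset k ℓ).ncard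

/-- Shifted `k`-generalized Fibonacci numbers: `f_ℓ^(k) = 2^ℓ` for `ℓ ≤ k-1`, and
`f_ℓ^(k) = ∑_{i=1}^{k} f_{ℓ-i}^(k)` for `ℓ ≥ k`. -/
def f (k : ℕ) : ℕ → ℕ
  | ℓ =>
    if h : ℓ < k then 2 ^ ℓ
    else ∑ i ∈ (Finset.range k).attach, f k (ℓ - (i.1 + 1))
termination_by ℓ => ℓ
decreasing_by
  have hi := i.2
  simp only [Finset.mem_range] at hi
  omega

/-- `S^(k)(n) = ∑_{ℓ=0}^{n} f_ℓ^(k)`. -/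
def S (k n : ℕ) : ℕ := ∑ ℓ ∈ Finset.range (n + 1), f k ℓ

/-- `d_ℓ^(k)`: 1 if `ℓ ≡ 0 (mod k)`, -1 if `ℓ ≡ 1 (mod k)`, 0 otherwise. -/
def d (k ℓ : ℕ) : ℤ := if ℓ % k = 0 then 1 else if ℓ % k = 1 then -1 else 0

/-- A set of binary strings is a cross-fix-free code if every element is
bifix-free and, for any two distinct elements `v, v'`, no nonempty prefix of
`v` (including `v` itself) is a suffix of `v'`, and vice versa. -/
def CrossFixFree (X : Set (List Bool)) : Prop :=
  (∀ v ∈ X, BifixFree v) ∧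
  ∀ v ∈ X, ∀ v' ∈ X, v ≠ v' → ∀ p : List Bool, p ≠ [] → p <+: v → ¬ p <:+ v'

/-- A strong cross-fix-free code: cross-fix-free and no codeword is a factor of
another. -/
def StrongCrossFixFree (X : Set (List Bool)) : Prop :=
  CrossFixFree X ∧ ∀ v ∈ X, ∀ v' ∈ X, v ≠ v' → ¬ v <:+: v'

/-- A Dyck word: equal numbers of 1's and 0's, and every prefix has at least as
many 1's as 0's. -/
def IsDyck (w : List Bool) : Prop :=
  w.count true = w.count false ∧ ∀ p : List Bool, p <+: w → p.count false ≤ p.count true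

/-- `𝒟 = { 1α0 : α a Dyck word }`. -/
def Dset : Set (List Bool) := {v | ∃ α : List Bool, IsDyck α ∧ v = true :: (α ++ [false])}

/-- `𝒟(n)`: elements of `𝒟` of length at most `n`. -/
def DLe (n : ℕ) : Set (List Bool) := {v ∈ Dset | v.length ≤ n}

namespace Stmt16Aux

/-- balance: #1's minus #0's, as an integer -/
def bal (w : List Bool) : ℤ := (w.count true : ℤ) - (w.count false : ℤ)

lemma bal_append (a b : List Bool) : bal (a ++ b) = bal a + bal b := by
  simp [bal, List.count_append]; ring

lemma bal_cons_true (q : List Bool) : bal (true :: q) = 1 + bal q := by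
  simp [bal, List.count_cons]; ring

lemma bal_cons_false (q : List Bool) : bal (false :: q) = bal q - 1 := by
  simp [bal, List.count_cons]; ring

/-- reverse complement -/
def sig (w : List Bool) : List Bool := (w.map not).reverse

lemma count_map_not (w : List Bool) (b : Bool) : (w.map not).count b = w.count (!b) := by
  induction w with
  | nil => simp
  | cons x t ih =>
    simp only [List.map_cons, List.count_cons, ih]
    cases x <;> cases b <;> simp

lemma count_sig (w : List Bool) (b : Bool) : (sig w).count b = w.count (!b) := by
  simp [sig, List.count_reverse, count_map_not]

lemma sig_append (a b : List Bool) : sig (a ++ b) = sig b ++ sig a := by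
  simp [sig]

lemma sig_sig (w : List Bool) : sig (sig w) = w := by
  simp [sig, List.map_reverse, List.map_map, Function.comp_def]

lemma sig_ne_nil {w : List Bool} (h : w ≠ []) : sig w ≠ [] := by
  simpa [sig] using h

lemma length_sig (w : List Bool) : (sig w).length = w.length := by simp [sig]

lemma bal_sig (w : List Bool) : bal (sig w) = - bal w := by
  simp [bal, count_sig]

lemma isDyck_sig {α : List Bool} (h : IsDyck α) : IsDyck (sig α) := by
  obtain ⟨hc, hp⟩ := h
  constructor
  · rw [count_sig, count_sig]; simp [hc]
  · intro q hq
    obtain ⟨t, ht⟩ := hq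
    have hα : α = sig t ++ sig q := by
      rw [← sig_sig α, ← ht, sig_append]
    have hr := hp (sig t) ⟨sig q, hα.symm⟩
    have e1 : α.count true = (sig t).count true + (sig q).count true := by
      rw [hα, List.count_append]
    have e2 : α.count false = (sig t).count false + (sig q).count false := by
      rw [hα, List.count_append]
    have e3 : (sig q).count true = q.count false := by rw [count_sig]; rfl
    have e4 : (sig q).count false = q.count true := by rw [count_sig]; rfl
    omega

lemma mem_Dset_sig {w : List Bool} (h : w ∈ Dset) : sig w ∈ Dset := by
  obtain ⟨α, hα, rfl⟩ := h
  refine ⟨sig α, isDyck_sig hα, ?_⟩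
  have : (true :: (α ++ [false])) = [true] ++ α ++ [false] := by simp
  rw [this, sig_append, sig_append]
  simp [sig]

lemma bal_take_one {ψ : List Bool} (h : ψ.head? = some true) : bal (ψ.take 1) = 1 := by
  cases ψ with
  | nil => simp at h
  | cons a t =>
    simp only [List.head?_cons, Option.some.injEq] at h
    subst h
    simp [bal]

/-- Main extraction lemma: if ψ starts with 1 and has balance ≤ 0, then some
nonempty prefix of ψ is in 𝒟. -/
lemma extract {ψ : List Bool} (hhead : ψ.head? = some true) (hbal : bal ψ ≤ 0) :
    ∃ p, p ≠ [] ∧ p <+: ψ ∧ p ∈ Dset := by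
  classical
  have hψne : ψ ≠ [] := by intro h; simp [h] at hhead
  have hlen1 : 1 ≤ ψ.length := List.length_pos_iff.mpr hψne
  have hP : ∃ i, 1 ≤ i ∧ bal (ψ.take i) ≤ 0 :=
    ⟨ψ.length, hlen1, by rw [List.take_length]; exact hbal⟩
  obtain ⟨i₀, ⟨hi1, hile⟩, hmin⟩ :
      ∃ i, (1 ≤ i ∧ bal (ψ.take i) ≤ 0) ∧ ∀ j, j < i → ¬ (1 ≤ j ∧ bal (ψ.take j) ≤ 0) :=
    ⟨Nat.find hP, Nat.find_spec hP, fun j hj => Nat.find_min hP hj⟩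
  have hpos : ∀ j, 1 ≤ j → j < i₀ → 1 ≤ bal (ψ.take j) := by
    intro j h1 h2
    have := hmin j h2
    push_neg at this
    have := this h1
    omega
  have hilen : i₀ ≤ ψ.length := by
    by_contra h
    exact hmin ψ.length (by omega) ⟨hlen1, by rw [List.take_length]; exact hbal⟩
  have h2i : 2 ≤ i₀ := by
    by_contra h
    have : i₀ = 1 := by omega
    rw [this] at hile
    rw [bal_take_one hhead] at hile
    omega
  -- the character at position i₀ - 1
  have hjlt : i₀ - 1 < ψ.length := by omega
  have hstep : ψ.take i₀ = ψ.take (i₀ - 1) ++ [ψ.get ⟨i₀ - 1, hjlt⟩] := by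
    have h := List.take_succ (l := ψ) (i := i₀ - 1)
    rw [show i₀ - 1 + 1 = i₀ from by omega] at h
    rw [h]
    congr 1
    rw [List.getElem?_eq_getElem hjlt]
    rfl
  have hprev : 1 ≤ bal (ψ.take (i₀ - 1)) := hpos (i₀ - 1) (by omega) (by omega)
  have hone : bal [true] = 1 := by norm_num [bal]
  have hmone : bal [false] = -1 := by norm_num [bal]
  have hchar : ψ.get ⟨i₀ - 1, hjlt⟩ = false := by
    cases hg : ψ.get ⟨i₀ - 1, hjlt⟩ with
    | false => rfl
    | true =>
      exfalso
      rw [hstep, hg, bal_append, hone] at hile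
      omega
  have hbal0 : bal (ψ.take i₀) = 0 := by
    rw [hstep, hchar, bal_append, hmone] at hile ⊢
    omega
  -- structure: ψ = true :: t
  obtain ⟨t, rfl⟩ : ∃ t, ψ = true :: t := by
    cases ψ with
    | nil => simp at hhead
    | cons a t =>
      simp only [List.head?_cons, Option.some.injEq] at hhead
      exact ⟨t, by rw [hhead]⟩
  set α := t.take (i₀ - 2) with hαdef
  have htake : (true :: t).take i₀ = true :: (α ++ [false]) := by
    rw [hstep, hchar]
    have h1 : (true :: t).take (i₀ - 1) = true :: t.take (i₀ - 2) := by
      have : i₀ - 1 = (i₀ - 2) + 1 := by omega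
      rw [this, List.take_succ_cons]
    rw [h1]
    simp [hαdef]
  have hαlen : α.length = i₀ - 2 := by
    rw [hαdef, List.length_take]
    have : t.length = (true :: t).length - 1 := by simp
    omega
  have hdyck : IsDyck α := by
    constructor
    · -- counts equal from bal = 0
      rw [htake] at hbal0
      have : bal (true :: (α ++ [false])) = bal α := by
        rw [bal_cons_true, bal_append]
        rw [hmone]
        ring
      rw [this] at hbal0
      simp only [bal] at hbal0
      omega
    · intro q hq
      have hpre : (true :: q) <+: ((true :: t).take i₀) := by
        rw [htake]
        exact List.cons_prefix_cons.mpr ⟨rfl, hq.trans (List.prefix_append α [false])⟩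
      have hpre2 : (true :: q) <+: (true :: t) := hpre.trans (List.take_prefix _ _)
      have hqlen : q.length + 1 < i₀ := by
        have := hq.length_le
        omega
      have heq : (true :: t).take (q.length + 1) = true :: q := by
        have := (List.prefix_iff_eq_take.mp hpre2)
        simp only [List.length_cons] at this
        exact this.symm
      have hb := hpos (q.length + 1) (by omega) hqlen
      rw [heq, bal_cons_true] at hb
      simp only [bal] at hb
      omega
  refine ⟨(true :: t).take i₀, ?_, List.take_prefix _ _, ⟨α, hdyck, htake⟩⟩
  rw [htake]
  simp

lemma dyck_nil : IsDyck [] := by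
  constructor
  · rfl
  · intro p hp
    rw [List.prefix_nil.mp hp]
    simp

end Stmt16Aux

open Stmt16Aux in
/-- For any `n ≥ 2`, `𝒟(n)` is non-expandable: for every
(nonempty) binary bifix-free string `ψ` of length at most `n` with
`ψ ∉ 𝒟(n)`, the set `𝒟(n) ∪ {ψ}` is not a cross-fix-free code. -/

theorem stmt_16 (n : ℕ) (hn : 2 ≤ n) :
    ∀ ψ : List Bool, ψ ≠ [] → BifixFree ψ → ψ.length ≤ n → ψ ∉ DLe n →
      ¬ CrossFixFree (DLe n ∪ {ψ}) := by
  intro ψ hne hbf hlen hnot hcff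
  obtain ⟨hall, hcross⟩ := hcff
  have h10D : [true, false] ∈ DLe n := ⟨⟨[], dyck_nil, rfl⟩, by simpa using hn⟩
  have hmemψ : ψ ∈ DLe n ∪ {ψ} := Or.inr rfl
  have hψnD : ψ ∉ Dset := fun h => hnot ⟨h, hlen⟩
  -- ψ starts with 1
  have hhead : ψ.head? = some true := by
    cases hψ : ψ.head? with
    | none => exact absurd (List.head?_eq_none_iff.mp hψ) hne
    | some a =>
      cases a
      · exfalso
        obtain ⟨t, rfl⟩ : ∃ t, ψ = false :: t := by
          cases ψ with
          | nil => simp at hψ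
          | cons x t =>
            simp only [List.head?_cons, Option.some.injEq] at hψ
            exact ⟨t, by rw [hψ]⟩
        have hneq : (false :: t) ≠ [true, false] := by simp
        exact hcross _ hmemψ [true, false] (Or.inl h10D) hneq [false] (by simp)
          ⟨t, rfl⟩ ⟨[true], rfl⟩
      · rfl
  -- ψ ends with 0
  have hlast : ψ.getLast? = some false := by
    cases hψ : ψ.getLast? with
    | none => exact absurd (List.getLast?_eq_none_iff.mp hψ) hne
    | some b =>
      cases b
      · rfl
      · exfalso
        obtain ⟨l, rfl⟩ : ∃ l, ψ = l ++ [true] := by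
          obtain ⟨l, hl⟩ := List.getLast?_eq_some_iff.mp hψ
          exact ⟨l, hl⟩
        have hneq : [true, false] ≠ l ++ [true] := by
          intro h
          have := congrArg List.getLast? h
          simp at this
        exact hcross [true, false] (Or.inl h10D) _ hmemψ hneq [true] (by simp)
          ⟨[false], rfl⟩ ⟨l, rfl⟩
  rcases le_or_gt (bal ψ) 0 with hle | hgt
  · -- prefix case
    obtain ⟨p, pne, ppre, pD⟩ := extract hhead hle
    have pneψ : p ≠ ψ := fun h => hψnD (h ▸ pD)
    have pmem : p ∈ DLe n := ⟨pD, le_trans ppre.length_le hlen⟩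
    exact hcross ψ hmemψ p (Or.inl pmem) (Ne.symm pneψ) p pne ppre (List.suffix_refl p)
  · -- suffix case via reverse complement
    have hheadσ : (sig ψ).head? = some true := by
      rw [sig, List.head?_reverse]
      obtain ⟨l, rfl⟩ := List.getLast?_eq_some_iff.mp hlast
      simp
    have hbalσ : bal (sig ψ) ≤ 0 := by rw [bal_sig]; omega
    obtain ⟨q, qne, qpre, qD⟩ := extract hheadσ hbalσ
    obtain ⟨t, ht⟩ := qpre
    have hsuf : sig q <:+ ψ := by
      refine ⟨sig t, ?_⟩
      rw [← sig_append, ht, sig_sig]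
    have pD : sig q ∈ Dset := mem_Dset_sig qD
    have pne : sig q ≠ [] := sig_ne_nil qne
    have pneψ : sig q ≠ ψ := fun h => hψnD (h ▸ pD)
    have pmem : sig q ∈ DLe n := ⟨pD, le_trans hsuf.length_le hlen⟩
    exact hcross (sig q) (Or.inl pmem) ψ hmemψ pneψ (sig q) pne (List.prefix_refl _) hsuf
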